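/- The span of the vectors |η_ℓ^j⟩ is invariant under U_β, and in this basis U_β acts by the matrix u_β with entries ⟨ℓ′,j′|u_β|ℓ,j⟩ = (−1)^j (1 − 2(ℓ+j)/(r+1)) δ_{ℓℓ′} δ_{jj′} + 2 √((ℓ+j)/(r+1)) √(1 − (ℓ+j)/(r+1)) δ_{ℓ−(−1)^j, ℓ′} δ_{1⊕j, j′}. -/

import Mathlib

/-- The set `η_ℓ^j = {(S,y) ∈ V : |S ∩ K| = ℓ, |{y} ∩ K| = j}`. -/
def etaSet (N r : ℕ) (K : Finset (Fin N)) (l j : ℕ) :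
    Finset {p : Finset (Fin N) × Fin N // p.1.card = r ∧ p.2 ∉ p.1} :=
  Finset.univ.filter (fun p => (p.val.1 ∩ K).card = l ∧ ({p.val.2} ∩ K).card = j)

/-- The normalized uniform superposition `|η_ℓ^j⟩`. -/
noncomputable def etaVec (N r : ℕ) (K : Finset (Fin N)) (l j : ℕ) :
    {p : Finset (Fin N) × Fin N // p.1.card = r ∧ p.2 ∉ p.1} → ℂ :=
  fun p => if p ∈ etaSet N r K l j
    then ((1 / Real.sqrt ((etaSet N r K l j).card) : ℝ) : ℂ) else 0

/-- `|β_{[S,y]}⟩ = (r+1)^{-1/2} ∑_{y' ∈ S∪{y}} |S∪{y}\{y'}, y'⟩`, indexed by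
the `(r+1)`-subset `T = S ∪ {y}`. -/
noncomputable def betaVec (N r : ℕ) (T : Finset (Fin N)) :
    {p : Finset (Fin N) × Fin N // p.1.card = r ∧ p.2 ∉ p.1} → ℂ :=
  fun p => if insert p.val.2 p.val.1 = T then ((1 / Real.sqrt (r + 1) : ℝ) : ℂ) else 0

/-- The operator `U_β = 2 ∑_{[S,y]} |β_{[S,y]}⟩⟨β_{[S,y]}| - I`. -/
noncomputable def Ubeta (N r : ℕ) :
    Matrix {p : Finset (Fin N) × Fin N // p.1.card = r ∧ p.2 ∉ p.1}
      {p : Finset (Fin N) × Fin N // p.1.card = r ∧ p.2 ∉ p.1} ℂ :=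
  (2 : ℂ) • (∑ T ∈ Finset.univ.filter (fun T : Finset (Fin N) => T.card = r + 1),
      Matrix.vecMulVec (betaVec N r T) (star (betaVec N r T))) - 1

/-- The index set of valid pairs `(ℓ,j)`, excluding `(k,1)`. -/
def pairSet (k : ℕ) : Finset (ℕ × ℕ) :=
  (Finset.range (k + 1) ×ˢ Finset.range 2).filter (fun q => ¬(q.1 = k ∧ q.2 = 1))

/-- The matrix element `⟨ℓ',j'|u_β|ℓ,j⟩`. -/
noncomputable def uBetaEntry (r : ℕ) (l j l' j' : ℕ) : ℝ :=
  (-1 : ℝ) ^ j * (1 - 2 * ((l : ℝ) + j) / ((r : ℝ) + 1))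
      * (if l = l' ∧ j = j' then 1 else 0)
    + 2 * Real.sqrt (((l : ℝ) + j) / ((r : ℝ) + 1))
        * Real.sqrt (1 - ((l : ℝ) + j) / ((r : ℝ) + 1))
        * (if (l : ℤ) - (-1 : ℤ) ^ j = (l' : ℤ) ∧ 1 - j = j' then 1 else 0)

lemma singleton_inter_card {N : ℕ} (y : Fin N) (K : Finset (Fin N)) :
    ({y} ∩ K).card = if y ∈ K then 1 else 0 := by
  split <;> simp [Finset.singleton_inter_of_mem, Finset.singleton_inter_of_notMem, *]

lemma sic_zero {N : ℕ} {y : Fin N} {K : Finset (Fin N)} :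
    ({y} ∩ K).card = 0 ↔ y ∉ K := by
  rw [singleton_inter_card]; split <;> simp [*]

lemma sic_one {N : ℕ} {y : Fin N} {K : Finset (Fin N)} :
    ({y} ∩ K).card = 1 ↔ y ∈ K := by
  rw [singleton_inter_card]; split <;> simp [*]

lemma mem_etaSet {N r l j : ℕ} {K : Finset (Fin N)}
    {p : {p : Finset (Fin N) × Fin N // p.1.card = r ∧ p.2 ∉ p.1}} :
    p ∈ etaSet N r K l j ↔ (p.val.1 ∩ K).card = l ∧ ({p.val.2} ∩ K).card = j := by
  simp [etaSet]

lemma swap_card {N r : ℕ} {S : Finset (Fin N)} {y x : Fin N}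
    (hS : S.card = r) (hy : y ∉ S) (hx : x ∈ S) :
    (insert y (S.erase x)).card = r ∧ x ∉ insert y (S.erase x) := by
  constructor
  · rw [Finset.card_insert_of_notMem (fun h => hy (Finset.mem_of_mem_erase h)),
      Finset.card_erase_of_mem hx]
    have := Finset.card_pos.2 ⟨x, hx⟩
    omega
  · simp only [Finset.mem_insert, Finset.notMem_erase, or_false]
    rintro rfl; exact hy hx


lemma etaSet_pos {N r k : ℕ} (hkr : k ≤ r) (hkN : k + r < N) {K : Finset (Fin N)} (hK : K.card = k)
    {l j : ℕ} (hl : l ≤ k) (hj : j ≤ 1) (hlk : ¬(l = k ∧ j = 1)) :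
    0 < (etaSet N r K l j).card := by
  rw [Finset.card_pos]
  have hKc : Kᶜ.card = N - k := by
    rw [Finset.card_compl, hK]; simp
  obtain ⟨A, hAK, hA⟩ := Finset.exists_subset_card_eq (hK ▸ hl)
  obtain ⟨B, hBK, hB⟩ : ∃ B ⊆ Kᶜ, B.card = r - l := by
    refine Finset.exists_subset_card_eq ?_
    rw [hKc]; omega
  have hdisj : Disjoint A B := by
    refine Finset.disjoint_left.2 fun x hxA hxB => ?_
    exact (Finset.mem_compl.1 (hBK hxB)) (hAK hxA)
  have hScard : (A ∪ B).card = r := by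
    rw [Finset.card_union_of_disjoint hdisj, hA, hB]; omega
  have hSK : (A ∪ B) ∩ K = A := by
    rw [Finset.union_inter_distrib_right, Finset.inter_eq_left.2 hAK]
    have : B ∩ K = ∅ := by
      rw [← Finset.disjoint_iff_inter_eq_empty]
      exact Finset.disjoint_left.2 fun x hx => Finset.mem_compl.1 (hBK hx)
    simp [this]
  have hne : (if j = 1 then K \ A else Kᶜ \ B).Nonempty := by
    split
    · refine Finset.card_pos.1 ?_
      rw [Finset.card_sdiff_of_subset hAK, hK, hA]; omega
    · refine Finset.card_pos.1 ?_
      rw [Finset.card_sdiff_of_subset hBK, hKc, hB]; omega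
  obtain ⟨y, hy⟩ := hne
  interval_cases j
  · simp only [if_neg (by omega : ¬(0:ℕ) = 1), Finset.mem_sdiff, Finset.mem_compl] at hy
    have hyS : y ∉ A ∪ B := by
      simp only [Finset.mem_union]
      rintro (h | h)
      · exact hy.1 (hAK h)
      · exact hy.2 h
    exact ⟨⟨(A ∪ B, y), hScard, hyS⟩, by
      simp [etaSet, hSK, hA, singleton_inter_card, hy.1]⟩
  · simp only [reduceIte, Finset.mem_sdiff] at hy
    have hyS : y ∉ A ∪ B := by
      simp only [Finset.mem_union]
      rintro (h | h)
      · exact hy.2 h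
      · exact Finset.mem_compl.1 (hBK h) hy.1
    exact ⟨⟨(A ∪ B, y), hScard, hyS⟩, by
      simp [etaSet, hSK, hA, singleton_inter_card, hy.1]⟩

lemma ratio {N r : ℕ} (K : Finset (Fin N)) (l : ℕ) :
    (l + 1) * (etaSet N r K (l + 1) 0).card = (r - l) * (etaSet N r K l 1).card := by
  classical
  have hA : ((etaSet N r K (l + 1) 0).sigma (fun p => p.val.1 ∩ K)).card
      = (l + 1) * (etaSet N r K (l + 1) 0).card := by
    rw [Finset.card_sigma]
    rw [Finset.sum_congr rfl (fun p hp => (mem_etaSet.1 hp).1), Finset.sum_const, smul_eq_mul,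
      mul_comm]
  have hB : ((etaSet N r K l 1).sigma (fun p => p.val.1 \ K)).card
      = (r - l) * (etaSet N r K l 1).card := by
    rw [Finset.card_sigma]
    rw [Finset.sum_congr rfl (fun p hp => ?_), Finset.sum_const, smul_eq_mul, mul_comm]
    have h1 := (mem_etaSet.1 hp).1
    have h2 := Finset.card_inter_add_card_sdiff p.val.1 K
    rw [p.prop.1, h1] at h2
    omega
  rw [← hA, ← hB]
  refine Finset.card_bij'
    (fun a ha => ⟨⟨(insert a.1.val.2 (a.1.val.1.erase a.2), a.2), ?_, ?_⟩, a.1.val.2⟩)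
    (fun b hb => ⟨⟨(insert b.1.val.2 (b.1.val.1.erase b.2), b.2), ?_, ?_⟩, b.1.val.2⟩)
    ?_ ?_ ?_ ?_
  · have ha' := Finset.mem_sigma.1 ha
    exact (swap_card a.1.prop.1 a.1.prop.2 (Finset.mem_inter.1 ha'.2).1).1
  · have ha' := Finset.mem_sigma.1 ha
    exact (swap_card a.1.prop.1 a.1.prop.2 (Finset.mem_inter.1 ha'.2).1).2
  · have hb' := Finset.mem_sigma.1 hb
    exact (swap_card b.1.prop.1 b.1.prop.2 (Finset.mem_sdiff.1 hb'.2).1).1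
  · have hb' := Finset.mem_sigma.1 hb
    exact (swap_card b.1.prop.1 b.1.prop.2 (Finset.mem_sdiff.1 hb'.2).1).2
  · intro a ha
    have ha' := Finset.mem_sigma.1 ha
    obtain ⟨hm, hx⟩ := ha'
    obtain ⟨hSK, hyK0⟩ := mem_etaSet.1 hm
    have hyK : a.1.val.2 ∉ K := sic_zero.1 hyK0
    have hxSK := Finset.mem_inter.1 hx
    rw [Finset.mem_sigma]
    constructor
    · rw [mem_etaSet]
      constructor
      · show ((insert a.1.val.2 (a.1.val.1.erase a.2)) ∩ K).card = l
        rw [Finset.insert_inter_of_notMem hyK, Finset.erase_inter,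
          Finset.card_erase_of_mem hx, hSK]
        omega
      · exact sic_one.2 hxSK.2
    · show a.1.val.2 ∈ insert a.1.val.2 (a.1.val.1.erase a.2) \ K
      rw [Finset.mem_sdiff]
      exact ⟨Finset.mem_insert_self _ _, hyK⟩
  · intro b hb
    have hb' := Finset.mem_sigma.1 hb
    obtain ⟨hm, hz⟩ := hb'
    obtain ⟨hSK, hyK1⟩ := mem_etaSet.1 hm
    have hyK : b.1.val.2 ∈ K := sic_one.1 hyK1
    have hzS := Finset.mem_sdiff.1 hz
    rw [Finset.mem_sigma]
    constructor
    · rw [mem_etaSet]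
      constructor
      · show ((insert b.1.val.2 (b.1.val.1.erase b.2)) ∩ K).card = l + 1
        rw [Finset.insert_inter_of_mem hyK, Finset.erase_inter,
          Finset.erase_eq_of_notMem (fun h => hzS.2 (Finset.mem_inter.1 h).2),
          Finset.card_insert_of_notMem (fun h => b.1.prop.2 (Finset.mem_inter.1 h).1), hSK]
      · exact sic_zero.2 hzS.2
    · show b.1.val.2 ∈ insert b.1.val.2 (b.1.val.1.erase b.2) ∩ K
      exact Finset.mem_inter.2 ⟨Finset.mem_insert_self _ _, hyK⟩
  · intro a ha
    obtain ⟨⟨⟨S, y⟩, hS, hyS⟩, x⟩ := a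
    have ha' := Finset.mem_sigma.1 ha
    have hxS : x ∈ S := (Finset.mem_inter.1 ha'.2).1
    have key : insert x ((insert y (S.erase x)).erase y) = S := by
      rw [Finset.erase_insert (fun h => hyS (Finset.mem_of_mem_erase h))]
      exact Finset.insert_erase hxS
    simp only [key]
  · intro b hb
    obtain ⟨⟨⟨S, y⟩, hS, hyS⟩, z⟩ := b
    have hb' := Finset.mem_sigma.1 hb
    have hzS : z ∈ S := (Finset.mem_sdiff.1 hb'.2).1
    have key : insert z ((insert y (S.erase z)).erase y) = S := by
      rw [Finset.erase_insert (fun h => hyS (Finset.mem_of_mem_erase h))]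
      exact Finset.insert_erase hzS
    simp only [key]

lemma sqrt_helper {c m D Q Q' r : ℕ} (hmD : m + D = r + 1) (hQ : 0 < Q) (hQ' : 0 < Q')
    (h : c * c * Q' = m * D * Q) :
    2 * (1 / Real.sqrt ((r : ℝ) + 1)) * (1 / Real.sqrt ((r : ℝ) + 1) * (1 / Real.sqrt Q) * (c : ℝ))
      = 2 * Real.sqrt ((m : ℝ) / ((r : ℝ) + 1)) * Real.sqrt (1 - (m : ℝ) / ((r : ℝ) + 1))
          * (1 / Real.sqrt Q') := by
  have hR : (0:ℝ) < (r:ℝ) + 1 := by positivity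
  have hsR : 0 < Real.sqrt ((r:ℝ) + 1) := Real.sqrt_pos.2 hR
  have hsQ : 0 < Real.sqrt (Q:ℝ) := Real.sqrt_pos.2 (by exact_mod_cast hQ)
  have hsQ' : 0 < Real.sqrt (Q':ℝ) := Real.sqrt_pos.2 (by exact_mod_cast hQ')
  have e2 : (1:ℝ) - (m:ℝ) / ((r:ℝ) + 1) = (D:ℝ) / ((r:ℝ) + 1) := by
    have : (m:ℝ) + (D:ℝ) = (r:ℝ) + 1 := by exact_mod_cast congrArg (Nat.cast : ℕ → ℝ) hmD
    field_simp
    linarith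
  rw [e2, Real.sqrt_div (by positivity), Real.sqrt_div (by positivity)]
  have key : (c:ℝ) * Real.sqrt Q' = Real.sqrt m * Real.sqrt D * Real.sqrt Q := by
    have h1 : (c:ℝ) * Real.sqrt Q' = Real.sqrt ((c:ℝ) * c * Q') := by
      rw [Real.sqrt_mul (by positivity), Real.sqrt_mul (by positivity),
        Real.mul_self_sqrt (by positivity : (0:ℝ) ≤ (c:ℝ))]
    have h2 : Real.sqrt ((m:ℝ)) * Real.sqrt D * Real.sqrt Q = Real.sqrt ((m:ℝ) * D * Q) := by
      rw [Real.sqrt_mul (by positivity), Real.sqrt_mul (by positivity)]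
    rw [h1, h2]
    congr 1
    exact_mod_cast congrArg (Nat.cast : ℕ → ℝ) h
  have hss : Real.sqrt ((r:ℝ)+1) * Real.sqrt ((r:ℝ)+1) = (r:ℝ) + 1 :=
    Real.mul_self_sqrt (le_of_lt hR)
  field_simp
  have e3 : Real.sqrt ((r:ℝ)+1) * (Real.sqrt ((r:ℝ)+1) * Real.sqrt Q) = ((r:ℝ)+1) * Real.sqrt Q := by
    rw [← mul_assoc, hss]
  linear_combination key

lemma diag_helper (r : ℕ) (sQ : ℝ) (hsQ : 0 < sQ) (C D : ℝ) (h : 2 * C = ((r:ℝ)+1) * (1 + D)) :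
    2 * (1 / Real.sqrt ((r:ℝ)+1)) * (1 / Real.sqrt ((r:ℝ)+1) * (1/sQ) * C) - 1/sQ = D * (1/sQ) := by
  have hsR : 0 < Real.sqrt ((r:ℝ) + 1) := Real.sqrt_pos.2 (by positivity)
  have hss : Real.sqrt ((r:ℝ)+1) * Real.sqrt ((r:ℝ)+1) = (r:ℝ) + 1 :=
    Real.mul_self_sqrt (by positivity)
  field_simp
  linear_combination h - (1 + D) * hss


lemma count_lemma {N r l j : ℕ} (K : Finset (Fin N)) (hj : j ≤ 1) {T : Finset (Fin N)}
    (hT : T.card = r + 1) :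
    (Finset.univ.filter
        (fun p' : {p : Finset (Fin N) × Fin N // p.1.card = r ∧ p.2 ∉ p.1} =>
          insert p'.val.2 p'.val.1 = T ∧ (p'.val.1 ∩ K).card = l ∧ ({p'.val.2} ∩ K).card = j)).card
      = if (T ∩ K).card = l + j then (if j = 1 then l + 1 else r + 1 - l) else 0 := by
  classical
  -- step 1: the filter set is in bijection with a filter on T
  have step1 : (Finset.univ.filter
        (fun p' : {p : Finset (Fin N) × Fin N // p.1.card = r ∧ p.2 ∉ p.1} =>
          insert p'.val.2 p'.val.1 = T ∧ (p'.val.1 ∩ K).card = l ∧ ({p'.val.2} ∩ K).card = j)).card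
      = (T.filter (fun y => ((T.erase y) ∩ K).card = l ∧ ({y} ∩ K).card = j)).card := by
    refine Finset.card_bij' (fun p' _ => p'.val.2)
      (fun y hy => ⟨(T.erase y, y), ?_, Finset.notMem_erase y T⟩) ?_ ?_ ?_ ?_
    · rw [Finset.card_erase_of_mem (Finset.mem_filter.1 hy).1, hT]; omega
    · intro p' hp'
      obtain ⟨-, h1, h2, h3⟩ := Finset.mem_filter.1 hp'
      have hyT : p'.val.2 ∈ T := h1 ▸ Finset.mem_insert_self _ _
      have hE : T.erase p'.val.2 = p'.val.1 := by
        rw [← h1, Finset.erase_insert p'.prop.2]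
      rw [Finset.mem_filter, hE]
      exact ⟨hyT, h2, h3⟩
    · intro y hy
      obtain ⟨hyT, h2, h3⟩ := Finset.mem_filter.1 hy
      rw [Finset.mem_filter]
      exact ⟨Finset.mem_univ _, Finset.insert_erase hyT, h2, h3⟩
    · intro p' hp'
      obtain ⟨-, h1, -, -⟩ := Finset.mem_filter.1 hp'
      have hE : T.erase p'.val.2 = p'.val.1 := by
        rw [← h1, Finset.erase_insert p'.prop.2]
      ext : 1
      simp [hE]
    · intro y hy
      rfl
  rw [step1]
  interval_cases j
  · -- j = 0
    by_cases hm : (T ∩ K).card = l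
    · rw [if_pos (by omega)]
      have hset : T.filter (fun y => ((T.erase y) ∩ K).card = l ∧ ({y} ∩ K).card = 0)
          = T \ K := by
        ext y
        rw [Finset.mem_filter, Finset.mem_sdiff, sic_zero]
        constructor
        · rintro ⟨hyT, -, hyK⟩; exact ⟨hyT, hyK⟩
        · rintro ⟨hyT, hyK⟩
          refine ⟨hyT, ?_, hyK⟩
          rw [Finset.erase_inter, Finset.erase_eq_of_notMem
            (fun h => hyK (Finset.mem_inter.1 h).2), hm]
      rw [hset, if_neg (by omega)]
      have := Finset.card_inter_add_card_sdiff T K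
      omega
    · rw [if_neg (by omega)]
      rw [Finset.card_eq_zero, Finset.filter_eq_empty_iff]
      rintro y hyT ⟨h2, h3⟩
      rw [sic_zero] at h3
      rw [Finset.erase_inter, Finset.erase_eq_of_notMem
        (fun h => h3 (Finset.mem_inter.1 h).2)] at h2
      exact hm h2
  · -- j = 1
    by_cases hm : (T ∩ K).card = l + 1
    · rw [if_pos hm, if_pos rfl]
      have hset : T.filter (fun y => ((T.erase y) ∩ K).card = l ∧ ({y} ∩ K).card = 1)
          = T ∩ K := by
        ext y
        rw [Finset.mem_filter, Finset.mem_inter, sic_one]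
        constructor
        · rintro ⟨hyT, -, hyK⟩; exact ⟨hyT, hyK⟩
        · rintro ⟨hyT, hyK⟩
          refine ⟨hyT, ?_, hyK⟩
          rw [Finset.erase_inter, Finset.card_erase_of_mem (Finset.mem_inter.2 ⟨hyT, hyK⟩), hm]; omega
      rw [hset, hm]
    · rw [if_neg hm]
      rw [Finset.card_eq_zero, Finset.filter_eq_empty_iff]
      rintro y hyT ⟨h2, h3⟩
      rw [sic_one] at h3
      rw [Finset.erase_inter, Finset.card_erase_of_mem (Finset.mem_inter.2 ⟨hyT, h3⟩)] at h2
      have : (T ∩ K).card ≠ 0 := Finset.card_ne_zero_of_mem (Finset.mem_inter.2 ⟨hyT, h3⟩)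
      omega

lemma expand {N r : ℕ} (v : {p : Finset (Fin N) × Fin N // p.1.card = r ∧ p.2 ∉ p.1} → ℂ)
    (p : {p : Finset (Fin N) × Fin N // p.1.card = r ∧ p.2 ∉ p.1}) :
    (Ubeta N r).mulVec v p
      = 2 * ∑ T ∈ Finset.univ.filter (fun T : Finset (Fin N) => T.card = r + 1),
          betaVec N r T p * ∑ p', star (betaVec N r T p') * v p' - v p := by
  simp only [Ubeta, Matrix.mulVec, dotProduct, Matrix.sub_apply, Matrix.smul_apply,
    Matrix.one_apply, Matrix.sum_apply, Matrix.vecMulVec_apply, Pi.star_apply, smul_eq_mul,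
    sub_mul, ite_mul, one_mul, zero_mul, Finset.sum_sub_distrib, Finset.sum_ite_eq,
    Finset.mem_univ, if_true, Finset.sum_mul]
  congr 1
  calc ∑ x, (2 * ∑ T ∈ Finset.filter (fun T => T.card = r + 1) Finset.univ,
          betaVec N r T p * star (betaVec N r T x)) * v x
      = ∑ x, ∑ T ∈ Finset.filter (fun T => T.card = r + 1) Finset.univ,
          2 * (betaVec N r T p * (star (betaVec N r T x) * v x)) := by
        refine Finset.sum_congr rfl fun x _ => ?_
        rw [mul_assoc, Finset.sum_mul, Finset.mul_sum]
        refine Finset.sum_congr rfl fun T _ => ?_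
        ring
    _ = ∑ T ∈ Finset.filter (fun T => T.card = r + 1) Finset.univ,
          ∑ x, 2 * (betaVec N r T p * (star (betaVec N r T x) * v x)) := Finset.sum_comm
    _ = 2 * ∑ T ∈ Finset.filter (fun T => T.card = r + 1) Finset.univ,
          betaVec N r T p * ∑ p', star (betaVec N r T p') * v p' := by
        rw [Finset.mul_sum]
        refine Finset.sum_congr rfl fun T _ => ?_
        rw [Finset.mul_sum, Finset.mul_sum]

lemma scalar_lemma {N r k : ℕ} (hkr : k ≤ r) (hkN : k + r < N) {K : Finset (Fin N)} (hK : K.card = k)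
    {l j a b : ℕ} (hl : l ≤ k) (hj : j ≤ 1) (hljk : ¬(l = k ∧ j = 1))
    (ha : a ≤ k) (hb : b ≤ 1) (hab : ¬(a = k ∧ b = 1)) :
    2 * (1 / Real.sqrt ((r : ℝ) + 1)) * (1 / Real.sqrt ((r : ℝ) + 1)
        * (1 / Real.sqrt ((etaSet N r K l j).card))
        * ((if a + b = l + j then (if j = 1 then l + 1 else r + 1 - l) else 0 : ℕ) : ℝ))
      - (if a = l ∧ b = j then 1 / Real.sqrt ((etaSet N r K l j).card) else 0)
    = uBetaEntry r l j a b * (1 / Real.sqrt ((etaSet N r K a b).card)) := by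
  have hQ : (0:ℕ) < (etaSet N r K l j).card := etaSet_pos hkr hkN hK hl hj hljk
  have hQ' : (0:ℕ) < (etaSet N r K a b).card := etaSet_pos hkr hkN hK ha hb hab
  have hsQ : 0 < Real.sqrt ((etaSet N r K l j).card) := Real.sqrt_pos.2 (by exact_mod_cast hQ)
  have hsQ' : 0 < Real.sqrt ((etaSet N r K a b).card) := Real.sqrt_pos.2 (by exact_mod_cast hQ')
  by_cases h1 : a = l ∧ b = j
  · obtain ⟨rfl, rfl⟩ := h1
    interval_cases b
    · have e1 : (if a + 0 = a + 0 then (if (0:ℕ) = 1 then a + 1 else r + 1 - a) else 0 : ℕ)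
          = r + 1 - a := by norm_num
      have e2 : uBetaEntry r a 0 a 0 = 1 - 2 * (a:ℝ) / ((r:ℝ)+1) := by
        unfold uBetaEntry
        rw [if_pos ⟨rfl, rfl⟩, if_neg (by norm_num)]
        norm_num
      rw [e1, e2, if_pos ⟨rfl, rfl⟩]
      have hcast : ((r + 1 - a : ℕ):ℝ) = (r:ℝ) + 1 - a := by
        rw [Nat.cast_sub (by omega)]; push_cast; ring
      rw [hcast]
      apply diag_helper r _ hsQ
      field_simp
      try ring
    · have e1 : (if a + 1 = a + 1 then (if (1:ℕ) = 1 then a + 1 else r + 1 - a) else 0 : ℕ)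
          = a + 1 := by norm_num
      have e2 : uBetaEntry r a 1 a 1 = -(1 - 2 * ((a:ℝ)+1) / ((r:ℝ)+1)) := by
        unfold uBetaEntry
        rw [if_pos ⟨rfl, rfl⟩, if_neg (by norm_num)]
        norm_num
      rw [e1, e2, if_pos ⟨rfl, rfl⟩]
      push_cast
      apply diag_helper r _ hsQ
      field_simp
      try ring
  · by_cases h2 : a + b = l + j
    · rw [if_pos h2, if_neg h1, sub_zero]
      have hbj : b ≠ j := fun hbj => h1 ⟨by omega, hbj⟩
      interval_cases j
      · -- j = 0 : b = 1, a = l - 1, l ≥ 1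
        have hb1 : b = 1 := by omega
        subst hb1
        have hal : l = a + 1 := by omega
        have e2 : uBetaEntry r l 0 a 1
            = 2 * Real.sqrt ((l:ℝ) / ((r:ℝ)+1)) * Real.sqrt (1 - (l:ℝ) / ((r:ℝ)+1)) := by
          unfold uBetaEntry
          rw [if_neg (by omega), if_pos ⟨by omega, by omega⟩]
          norm_num
        rw [e2, if_neg (by omega)]
        have hrat := ratio (r := r) K a   -- (a+1) * Nc (a+1) 0 = (r - a) * Nc a 1
        subst hal
        have hc : r + 1 - (a + 1) = r - a := by omega
        rw [hc]
        have key : (r - a) * (r - a) * (etaSet N r K a 1).card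
            = (a + 1) * (r - a) * (etaSet N r K (a + 1) 0).card := by
          calc (r - a) * (r - a) * (etaSet N r K a 1).card
              = (r - a) * ((r - a) * (etaSet N r K a 1).card) := by ring
            _ = (r - a) * ((a + 1) * (etaSet N r K (a + 1) 0).card) := by rw [← hrat]
            _ = (a + 1) * (r - a) * (etaSet N r K (a + 1) 0).card := by ring
        have := sqrt_helper (c := r - a) (m := a + 1) (D := r - a)
          (Q := (etaSet N r K (a+1) 0).card) (Q' := (etaSet N r K a 1).card) (r := r)
          (by omega) hQ hQ' key
        rw [this]
        all_goals try push_cast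
        all_goals try ring
      · -- j = 1 : b = 0, a = l + 1
        have hb1 : b = 0 := by omega
        subst hb1
        have hal : a = l + 1 := by omega
        have e2 : uBetaEntry r l 1 a 0
            = 2 * Real.sqrt (((l:ℝ)+1) / ((r:ℝ)+1)) * Real.sqrt (1 - ((l:ℝ)+1) / ((r:ℝ)+1)) := by
          unfold uBetaEntry
          rw [if_neg (by omega), if_pos ⟨by omega, by omega⟩]
          norm_num
        rw [e2, if_pos rfl]
        subst hal
        have hrat := ratio (r := r) K l  -- (l+1) * Nc (l+1) 0 = (r - l) * Nc l 1
        have key : (l + 1) * (l + 1) * (etaSet N r K (l + 1) 0).card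
            = (l + 1) * (r - l) * (etaSet N r K l 1).card := by
          calc (l + 1) * (l + 1) * (etaSet N r K (l + 1) 0).card
              = (l + 1) * ((l + 1) * (etaSet N r K (l + 1) 0).card) := by ring
            _ = (l + 1) * ((r - l) * (etaSet N r K l 1).card) := by rw [hrat]
            _ = (l + 1) * (r - l) * (etaSet N r K l 1).card := by ring
        have := sqrt_helper (c := l + 1) (m := l + 1) (D := r - l)
          (Q := (etaSet N r K l 1).card) (Q' := (etaSet N r K (l+1) 0).card) (r := r)
          (by omega) hQ hQ' key
        rw [this]
        all_goals try push_cast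
        all_goals try ring
    · rw [if_neg h2, if_neg (fun h => h1 ⟨h.1, h.2⟩)]
      unfold uBetaEntry
      rw [if_neg (fun h => h1 ⟨h.1.symm, h.2.symm⟩)]
      interval_cases j
      · rw [if_neg (by norm_num; omega)]
        simp
      · rw [if_neg (by norm_num; omega)]
        simp


lemma insert_inter_card {N : ℕ} {S K : Finset (Fin N)} {y : Fin N} (hyS : y ∉ S) :
    ((insert y S) ∩ K).card = (S ∩ K).card + ({y} ∩ K).card := by
  by_cases hyK : y ∈ K
  · rw [Finset.insert_inter_of_mem hyK,
      Finset.card_insert_of_notMem (fun h => hyS (Finset.mem_inter.1 h).1),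
      singleton_inter_card, if_pos hyK]
  · rw [Finset.insert_inter_of_notMem hyK, singleton_inter_card, if_neg hyK, add_zero]

lemma innerSumEta {N r l j : ℕ} (K : Finset (Fin N)) (hj : j ≤ 1) {T : Finset (Fin N)}
    (hT : T.card = r + 1) :
    ∑ p', star (betaVec N r T p') * etaVec N r K l j p'
      = ((if (T ∩ K).card = l + j then (if j = 1 then l + 1 else r + 1 - l) else 0 : ℕ) : ℂ)
        * (((1 / Real.sqrt (r + 1) : ℝ) : ℂ)
            * ((1 / Real.sqrt ((etaSet N r K l j).card) : ℝ) : ℂ)) := by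
  classical
  have hstep : ∀ p' : {p : Finset (Fin N) × Fin N // p.1.card = r ∧ p.2 ∉ p.1},
      star (betaVec N r T p') * etaVec N r K l j p'
        = if (insert p'.val.2 p'.val.1 = T ∧ ((p'.val.1 ∩ K).card = l
            ∧ ({p'.val.2} ∩ K).card = j)) then
            (((1 / Real.sqrt (r + 1) : ℝ) : ℂ)
              * ((1 / Real.sqrt ((etaSet N r K l j).card) : ℝ) : ℂ)) else 0 := by
    intro p'
    unfold betaVec etaVec
    by_cases hA : insert p'.val.2 p'.val.1 = T <;>
      by_cases hB : (p'.val.1 ∩ K).card = l ∧ ({p'.val.2} ∩ K).card = j <;>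
        simp [hA, hB, etaSet, Complex.conj_ofReal]
  rw [Finset.sum_congr rfl (fun p' _ => hstep p'), Finset.sum_ite, Finset.sum_const,
    Finset.sum_const_zero, add_zero, count_lemma K hj hT, nsmul_eq_mul]

/-- The span of the vectors `|η_ℓ^j⟩` is invariant under `U_β`, which acts on
them by the matrix `u_β`:
`U_β|η_ℓ^j⟩ = ∑_{ℓ',j'} ⟨ℓ',j'|u_β|ℓ,j⟩ |η_{ℓ'}^{j'}⟩`. -/
theorem stmt12 (N r k : ℕ) (hk : 0 < k) (hkr : k ≤ r) (hkN : k < N - r)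
    (K : Finset (Fin N)) (hK : K.card = k) :
    ∀ q ∈ pairSet k,
      (Ubeta N r).mulVec (etaVec N r K q.1 q.2)
        = ∑ q' ∈ pairSet k,
            ((uBetaEntry r q.1 q.2 q'.1 q'.2 : ℝ) : ℂ) • etaVec N r K q'.1 q'.2 := by
  classical
  rintro ⟨l, j⟩ hq
  simp only [pairSet, Finset.mem_filter, Finset.mem_product, Finset.mem_range] at hq
  obtain ⟨⟨hl1, hj1⟩, hlj⟩ := hq
  have hl : l ≤ k := by omega
  have hj : j ≤ 1 := by omega
  have hkrN : k + r < N := by omega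
  funext p
  -- abbreviations
  have ha : (p.val.1 ∩ K).card ≤ k := hK ▸ Finset.card_le_card Finset.inter_subset_right
  have hb : ({p.val.2} ∩ K).card ≤ 1 := by
    rw [singleton_inter_card]; split <;> omega
  have hab : ¬((p.val.1 ∩ K).card = k ∧ ({p.val.2} ∩ K).card = 1) := by
    rintro ⟨h1, h2⟩
    have hKS : p.val.1 ∩ K = K :=
      Finset.eq_of_subset_of_card_le Finset.inter_subset_right (by rw [hK, h1])
    have hyK : p.val.2 ∈ K := sic_one.1 h2
    rw [← hKS] at hyK
    exact p.prop.2 (Finset.mem_inter.1 hyK).1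
  have hT₀ : (insert p.val.2 p.val.1).card = r + 1 := by
    rw [Finset.card_insert_of_notMem p.prop.2, p.prop.1]
  have hT₀K : ((insert p.val.2 p.val.1) ∩ K).card
      = (p.val.1 ∩ K).card + ({p.val.2} ∩ K).card := insert_inter_card p.prop.2
  -- LHS
  rw [expand]
  rw [Finset.sum_eq_single_of_mem (insert p.val.2 p.val.1)
    (Finset.mem_filter.2 ⟨Finset.mem_univ _, hT₀⟩)
    (fun T _ hTne => by
      unfold betaVec
      rw [if_neg (fun h => hTne h.symm), zero_mul])]
  rw [innerSumEta K hj hT₀, hT₀K]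
  have hβ : betaVec N r (insert p.val.2 p.val.1) p = ((1 / Real.sqrt (r + 1) : ℝ) : ℂ) :=
    if_pos rfl
  rw [hβ]
  have hη : etaVec N r K l j p
      = ((if (p.val.1 ∩ K).card = l ∧ ({p.val.2} ∩ K).card = j then
          (1 / Real.sqrt ((etaSet N r K l j).card) : ℝ) else 0 : ℝ) : ℂ) := by
    unfold etaVec
    by_cases h : (p.val.1 ∩ K).card = l ∧ ({p.val.2} ∩ K).card = j <;>
      simp [h, mem_etaSet]
  rw [hη]
  -- RHS
  rw [Finset.sum_apply]
  rw [Finset.sum_eq_single_of_mem ((p.val.1 ∩ K).card, ({p.val.2} ∩ K).card)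
    (by simp only [pairSet, Finset.mem_filter, Finset.mem_product, Finset.mem_range]; omega)
    (fun q' _ hq'ne => by
      simp only [Pi.smul_apply, smul_eq_mul]
      have : etaVec N r K q'.1 q'.2 p = 0 := by
        unfold etaVec
        rw [if_neg (fun h => hq'ne (by
          obtain ⟨h1, h2⟩ := mem_etaSet.1 h
          rw [h1, h2]))]
      rw [this, mul_zero])]
  simp only [Pi.smul_apply, smul_eq_mul]
  have hη' : etaVec N r K (p.val.1 ∩ K).card ({p.val.2} ∩ K).card p
      = ((1 / Real.sqrt ((etaSet N r K (p.val.1 ∩ K).card ({p.val.2} ∩ K).card).card) : ℝ) : ℂ) := by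
    unfold etaVec
    rw [if_pos (mem_etaSet.2 ⟨rfl, rfl⟩)]
  rw [hη']
  -- reduce to the real scalar identity
  have key := scalar_lemma hkr hkrN hK hl hj (by omega) ha hb hab
  calc (2 : ℂ) * (((1 / Real.sqrt (↑r + 1) : ℝ) : ℂ)
          * (((if (p.val.1 ∩ K).card + ({p.val.2} ∩ K).card = l + j then
              (if j = 1 then l + 1 else r + 1 - l) else 0 : ℕ) : ℂ)
            * (((1 / Real.sqrt (↑r + 1) : ℝ) : ℂ)
              * ((1 / Real.sqrt ((etaSet N r K l j).card) : ℝ) : ℂ))))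
        - ((if (p.val.1 ∩ K).card = l ∧ ({p.val.2} ∩ K).card = j then
            (1 / Real.sqrt ((etaSet N r K l j).card) : ℝ) else 0 : ℝ) : ℂ)
      = ((2 * (1 / Real.sqrt ((r : ℝ) + 1)) * (1 / Real.sqrt ((r : ℝ) + 1)
            * (1 / Real.sqrt ((etaSet N r K l j).card))
            * ((if (p.val.1 ∩ K).card + ({p.val.2} ∩ K).card = l + j then
                (if j = 1 then l + 1 else r + 1 - l) else 0 : ℕ) : ℝ))
          - (if (p.val.1 ∩ K).card = l ∧ ({p.val.2} ∩ K).card = j then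
              1 / Real.sqrt ((etaSet N r K l j).card) else 0) : ℝ) : ℂ) := by
        push_cast [apply_ite Complex.ofReal]
        ring
    _ = (((uBetaEntry r l j (p.val.1 ∩ K).card ({p.val.2} ∩ K).card)
          * (1 / Real.sqrt ((etaSet N r K (p.val.1 ∩ K).card ({p.val.2} ∩ K).card).card))
          : ℝ) : ℂ) := by rw [key]
    _ = ((uBetaEntry r l j (p.val.1 ∩ K).card ({p.val.2} ∩ K).card : ℝ) : ℂ)
          * ((1 / Real.sqrt ((etaSet N r K (p.val.1 ∩ K).card ({p.val.2} ∩ K).card).card) : ℝ) : ℂ) := by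
        push_cast
        ring
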